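/- arXiv:1410.2513 — 2 statements merged into one kernel-verified Lean document; each statement's English description precedes it below -/
import Mathlib

section
/- A cyclic surface in Sol₃ foliated by equidistant lines of the form X(s,t) = (s, t, log(a(s)·t)), where a : I → ℝ is twice continuously differentiable and positive on a nonempty open interval I and t ranges over a nonempty open interval J ⊆ (0,∞), has zero mean curvature if and only if 1/a is affine, i.e. there exist α, β ∈ ℝ with a(s)·(α·s + β) = 1 for all s ∈ I. Equivalently, the mean curvature vanishes identically if and only if a(s)·a''(s) − 2·a'(s)² = 0 on I; the nonconstant solutions are a(s) = a₀/(s + a₁). -/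
open Real

noncomputable section

/-- Tangent/ambient vectors of Sol₃ modeled on ℝ³. -/
abbrev V3 : Type := ℝ × ℝ × ℝ

/-- The Sol₃ metric at a point `p = (x,y,z)`:
`g_p(u,v) = e^{2z}u₁v₁ + e^{-2z}u₂v₂ + u₃v₃`. -/
def gSol (p u v : V3) : ℝ :=
  exp (2 * p.2.2) * u.1 * v.1 + exp (-(2 * p.2.2)) * u.2.1 * v.2.1 + u.2.2 * v.2.2

/-- The Christoffel bilinear map of the Sol₃ metric at a point `p`. -/
def GammaSol (p u v : V3) : V3 :=
  (u.1 * v.2.2 + u.2.2 * v.1,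
   -(u.2.1 * v.2.2 + u.2.2 * v.2.1),
   -exp (2 * p.2.2) * u.1 * v.1 + exp (-(2 * p.2.2)) * u.2.1 * v.2.1)

/-- Partial derivative of a parametrized surface with respect to the first parameter. -/
def pXs (X : ℝ → ℝ → V3) (s t : ℝ) : V3 := deriv (fun s' => X s' t) s

/-- Partial derivative of a parametrized surface with respect to the second parameter. -/
def pXt (X : ℝ → ℝ → V3) (s t : ℝ) : V3 := deriv (fun t' => X s t') t

/-- Ambient second-order quantity `S_ss = X_ss + Γ_X(X_s, X_s)`. -/
def Sss (X : ℝ → ℝ → V3) (s t : ℝ) : V3 :=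
  deriv (fun s' => pXs X s' t) s + GammaSol (X s t) (pXs X s t) (pXs X s t)

/-- Ambient second-order quantity `S_st = X_st + Γ_X(X_s, X_t)`. -/
def Sst (X : ℝ → ℝ → V3) (s t : ℝ) : V3 :=
  deriv (fun t' => pXs X s t') t + GammaSol (X s t) (pXs X s t) (pXt X s t)

/-- Ambient second-order quantity `S_tt = X_tt + Γ_X(X_t, X_t)`. -/
def Stt (X : ℝ → ℝ → V3) (s t : ℝ) : V3 :=
  deriv (fun t' => pXt X s t') t + GammaSol (X s t) (pXt X s t) (pXt X s t)

/-- `X : I × J → Sol₃` has zero mean curvature: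
for every point of `I × J` and every normal vector `n`,
`E·g(S_tt,n) - 2F·g(S_st,n) + G·g(S_ss,n) = 0`. -/
def MeanZero (I J : Set ℝ) (X : ℝ → ℝ → V3) : Prop :=
  ∀ s ∈ I, ∀ t ∈ J, ∀ n : V3,
    gSol (X s t) n (pXs X s t) = 0 → gSol (X s t) n (pXt X s t) = 0 →
    gSol (X s t) (pXs X s t) (pXs X s t) * gSol (X s t) (Stt X s t) n
      - 2 * gSol (X s t) (pXs X s t) (pXt X s t) * gSol (X s t) (Sst X s t) n
      + gSol (X s t) (pXt X s t) (pXt X s t) * gSol (X s t) (Sss X s t) n = 0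

/-- `X : I × J → Sol₃` has zero Gaussian curvature:
for every point of `I × J` and every normal vector `n`,
`g(S_ss,n)·g(S_tt,n) - g(S_st,n)² = 0`. -/
def GaussZero (I J : Set ℝ) (X : ℝ → ℝ → V3) : Prop :=
  ∀ s ∈ I, ∀ t ∈ J, ∀ n : V3,
    gSol (X s t) n (pXs X s t) = 0 → gSol (X s t) n (pXt X s t) = 0 →
    gSol (X s t) (Sss X s t) n * gSol (X s t) (Stt X s t) n
      - (gSol (X s t) (Sst X s t) n) ^ 2 = 0
/-! Auxiliary lemmas -/

lemma pXs_eq {a : ℝ → ℝ} {A' s t : ℝ} (ha : HasDerivAt a A' s) (h0 : a s ≠ 0) (ht : t ≠ 0) :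
    pXs ((fun s t => (s, t, log (a s * t)))) s t = (1, 0, A' / a s) := by
  have h : HasDerivAt (fun s' : ℝ => ((s' : ℝ), ((t : ℝ), log (a s' * t))))
      (1, (0, A' * t / (a s * t))) s :=
    (hasDerivAt_id s).prodMk ((hasDerivAt_const s t).prodMk
      ((ha.mul_const t).log (mul_ne_zero h0 ht)))
  rw [pXs, h.deriv, mul_div_mul_right _ _ ht]

lemma pXt_eq {a : ℝ → ℝ} {s t : ℝ} (h0 : a s ≠ 0) (ht : t ≠ 0) :
    pXt ((fun s t => (s, t, log (a s * t)))) s t = (0, 1, 1 / t) := by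
  have h : HasDerivAt (fun t' : ℝ => ((s : ℝ), ((t' : ℝ), log (a s * t'))))
      (0, (1, a s * 1 / (a s * t))) t :=
    (hasDerivAt_const t s).prodMk ((hasDerivAt_id t).prodMk
      (((hasDerivAt_id t).const_mul (a s)).log (mul_ne_zero h0 ht)))
  rw [pXt, h.deriv, mul_one]
  congr 2
  rw [div_eq_div_iff (mul_ne_zero h0 ht) ht]
  ring

section
variable {I : Set ℝ} {a : ℝ → ℝ} {s t : ℝ}

lemma hdiff1 (hIo : IsOpen I) (ha : ContDiffOn ℝ 2 a I) :
    ∀ x ∈ I, HasDerivAt a (deriv a x) x := fun x hx =>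
  ((ha.differentiableOn two_ne_zero).differentiableAt (hIo.mem_nhds hx)).hasDerivAt

lemma hdiff2 (hIo : IsOpen I) (ha : ContDiffOn ℝ 2 a I) :
    ∀ x ∈ I, HasDerivAt (deriv a) (deriv (deriv a) x) x := fun x hx =>
  (((ha.deriv_of_isOpen (m := 1) hIo (le_refl 2)).differentiableOn one_ne_zero).differentiableAt
    (hIo.mem_nhds hx)).hasDerivAt

lemma sss_eq (hIo : IsOpen I) (hs : s ∈ I) (ha : ContDiffOn ℝ 2 a I)
    (hapos : ∀ x ∈ I, 0 < a x) (ht : 0 < t) :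
    deriv (fun s' => pXs ((fun s t => (s, t, log (a s * t)))) s' t) s
      = (0, 0, (deriv (deriv a) s * a s - deriv a s * deriv a s) / (a s) ^ 2) := by
  have hev : (fun s' => pXs ((fun s t => (s, t, log (a s * t)))) s' t)
      =ᶠ[nhds s] fun s' => ((1:ℝ), (0:ℝ), deriv a s' / a s') := by
    filter_upwards [hIo.mem_nhds hs] with x hx using
      pXs_eq (hdiff1 hIo ha x hx) (hapos x hx).ne' ht.ne'
  rw [hev.deriv_eq]
  exact ((hasDerivAt_const s (1:ℝ)).prodMk ((hasDerivAt_const s (0:ℝ)).prodMk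
    ((hdiff2 hIo ha s hs).div (hdiff1 hIo ha s hs) (hapos s hs).ne'))).deriv

lemma sst_eq (hIo : IsOpen I) (hs : s ∈ I) (ha : ContDiffOn ℝ 2 a I)
    (hapos : ∀ x ∈ I, 0 < a x) (ht : 0 < t) :
    deriv (fun t' => pXs ((fun s t => (s, t, log (a s * t)))) s t') t = 0 := by
  have hev : (fun t' => pXs ((fun s t => (s, t, log (a s * t)))) s t')
      =ᶠ[nhds t] fun _ => ((1:ℝ), (0:ℝ), deriv a s / a s) := by
    filter_upwards [isOpen_Ioi.mem_nhds ht] with x hx using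
      pXs_eq (hdiff1 hIo ha s hs) (hapos s hs).ne' (ne_of_gt hx)
  rw [hev.deriv_eq, deriv_const]

lemma stt_eq (hs : a s ≠ 0) (ht : 0 < t) :
    deriv (fun t' => pXt ((fun s t => (s, t, log (a s * t)))) s t') t = (0, 0, -(t ^ 2)⁻¹) := by
  have hev : (fun t' => pXt ((fun s t => (s, t, log (a s * t)))) s t')
      =ᶠ[nhds t] fun t' => ((0:ℝ), (1:ℝ), (t')⁻¹) := by
    filter_upwards [isOpen_Ioi.mem_nhds ht] with x hx
    simpa [one_div] using pXt_eq (a := a) (s := s) hs (ne_of_gt hx)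
  rw [hev.deriv_eq]
  exact ((hasDerivAt_const t (0:ℝ)).prodMk ((hasDerivAt_const t (1:ℝ)).prodMk
    (hasDerivAt_inv ht.ne'))).deriv

lemma key_eq (hIo : IsOpen I) (hs : s ∈ I) (ha : ContDiffOn ℝ 2 a I)
    (hapos : ∀ x ∈ I, 0 < a x) (ht : 0 < t) (n : V3)
    (hn1 : gSol ((fun s t => (s, t, log (a s * t))) s t) n (pXs ((fun s t => (s, t, log (a s * t)))) s t) = 0)
    (hn2 : gSol ((fun s t => (s, t, log (a s * t))) s t) n (pXt ((fun s t => (s, t, log (a s * t)))) s t) = 0) :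
    gSol ((fun s t => (s, t, log (a s * t))) s t) (pXs ((fun s t => (s, t, log (a s * t)))) s t) (pXs ((fun s t => (s, t, log (a s * t)))) s t) * gSol ((fun s t => (s, t, log (a s * t))) s t) (Stt ((fun s t => (s, t, log (a s * t)))) s t) n
      - 2 * gSol ((fun s t => (s, t, log (a s * t))) s t) (pXs ((fun s t => (s, t, log (a s * t)))) s t) (pXt ((fun s t => (s, t, log (a s * t)))) s t) * gSol ((fun s t => (s, t, log (a s * t))) s t) (Sst ((fun s t => (s, t, log (a s * t)))) s t) n
      + gSol ((fun s t => (s, t, log (a s * t))) s t) (pXt ((fun s t => (s, t, log (a s * t)))) s t) (pXt ((fun s t => (s, t, log (a s * t)))) s t) * gSol ((fun s t => (s, t, log (a s * t))) s t) (Sss ((fun s t => (s, t, log (a s * t)))) s t) n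
    = n.2.2 * ((1 + (a s) ^ 2) / ((a s) ^ 4 * t ^ 2))
        * (a s * deriv (deriv a) s - 2 * (deriv a s) ^ 2) := by
  obtain ⟨n1, n2, n3⟩ := n
  have hA := hapos s hs
  have h1 : pXs ((fun s t => (s, t, log (a s * t)))) s t = (1, 0, deriv a s / a s) :=
    pXs_eq (hdiff1 hIo ha s hs) hA.ne' ht.ne'
  have h2 : pXt ((fun s t => (s, t, log (a s * t)))) s t = (0, 1, 1 / t) := pXt_eq hA.ne' ht.ne'
  have h3 := sss_eq hIo hs ha hapos ht
  have h4 := sst_eq hIo hs ha hapos ht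
  have h5 := stt_eq hA.ne' ht
  have he1 : exp (2 * log (a s * t)) = (a s * t) ^ 2 := by
    rw [show (2:ℝ) * log (a s * t) = log ((a s * t) ^ 2) by rw [log_pow]; push_cast; ring,
      exp_log (by positivity)]
  have he2 : exp (-(2 * log (a s * t))) = ((a s * t) ^ 2)⁻¹ := by rw [exp_neg, he1]
  simp only [Sss, Sst, Stt, gSol, GammaSol, h1, h2, h3, h4, h5, he1, he2,
    Prod.mk_add_mk, zero_add] at hn1 hn2 ⊢
  have e1 : n1 = -(n3 * deriv a s) / ((a s) ^ 3 * t ^ 2) := by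
    rw [eq_div_iff (by positivity)]
    field_simp at hn1
    exact mul_left_cancel₀ (mul_ne_zero hA.ne' (pow_ne_zero 2 ht.ne')) (by linear_combination hn1)
  have e2 : n2 = -(n3 * (a s) ^ 2 * t) := by
    field_simp at hn2
    linear_combination hn2
  subst e1 e2
  field_simp
  ring

lemma const_of_deriv_zero (hconv : Convex ℝ I) (hIo : IsOpen I)
    {g : ℝ → ℝ} (hg : ∀ x ∈ I, HasDerivAt g 0 x) {x y : ℝ} (hx : x ∈ I) (hy : y ∈ I) :
    g x = g y := by
  refine hconv.is_const_of_fderivWithin_eq_zero (𝕜 := ℝ)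
    (fun z hz => (hg z hz).differentiableAt.differentiableWithinAt) (fun z hz => ?_) hx hy
  rw [fderivWithin_of_mem_nhds (hIo.mem_nhds hz)]
  have := (hg z hz).hasFDerivAt.fderiv
  rw [this]
  ext u
  simp

end

/-- The cyclic surface `X(s,t) = (s, t, log(a(s)·t))` foliated by
equidistant lines has zero mean curvature iff `1/a` is affine,
equivalently iff `a·a'' - 2·a'² = 0` on `I`. -/
theorem minimal_foliated_by_equidistant_lines
    (I J : Set ℝ) (hIo : IsOpen I) (hIne : I.Nonempty) (hIc : I.OrdConnected)
    (hJo : IsOpen J) (hJne : J.Nonempty) (hJc : J.OrdConnected)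
    (hJpos : J ⊆ Set.Ioi (0 : ℝ))
    (a : ℝ → ℝ) (ha : ContDiffOn ℝ 2 a I) (hapos : ∀ s ∈ I, 0 < a s) :
    (MeanZero I J (fun s t => (s, t, log (a s * t))) ↔
      ∃ α β : ℝ, ∀ s ∈ I, a s * (α * s + β) = 1) ∧
    (MeanZero I J (fun s t => (s, t, log (a s * t))) ↔
      ∀ s ∈ I, a s * deriv (deriv a) s - 2 * (deriv a s) ^ 2 = 0) := by
  have hconv : Convex ℝ I := hIc.convex
  have hODE : MeanZero I J (fun s t => (s, t, log (a s * t))) ↔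
      ∀ s ∈ I, a s * deriv (deriv a) s - 2 * (deriv a s) ^ 2 = 0 := by
    constructor
    · intro h s hs
      obtain ⟨t, ht⟩ := hJne
      have htpos : 0 < t := hJpos ht
      have hApos := hapos s hs
      set n : V3 := (-(deriv a s) / ((a s) ^ 3 * t ^ 2), -((a s) ^ 2 * t), 1) with hn
      have hXs : pXs (fun s t => (s, t, log (a s * t))) s t = (1, 0, deriv a s / a s) :=
        pXs_eq (hdiff1 hIo ha s hs) hApos.ne' htpos.ne'
      have hXt : pXt (fun s t => (s, t, log (a s * t))) s t = (0, 1, 1 / t) :=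
        pXt_eq hApos.ne' htpos.ne'
      have he1 : exp (2 * log (a s * t)) = (a s * t) ^ 2 := by
        rw [show (2:ℝ) * log (a s * t) = log ((a s * t) ^ 2) by rw [log_pow]; push_cast; ring,
          exp_log (by positivity)]
      have he2 : exp (-(2 * log (a s * t))) = ((a s * t) ^ 2)⁻¹ := by rw [exp_neg, he1]
      have hn1 : gSol ((fun s t => (s, t, log (a s * t))) s t) n
          (pXs (fun s t => (s, t, log (a s * t))) s t) = 0 := by
        simp only [gSol, hXs, hn, he1, he2]
        field_simp
        ring
      have hn2 : gSol ((fun s t => (s, t, log (a s * t))) s t) n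
          (pXt (fun s t => (s, t, log (a s * t))) s t) = 0 := by
        simp only [gSol, hXt, hn, he1, he2]
        field_simp
        ring
      have h0 := h s hs t ht n hn1 hn2
      rw [key_eq hIo hs ha hapos htpos n hn1 hn2] at h0
      have hc : ((1 + (a s) ^ 2) / ((a s) ^ 4 * t ^ 2)) ≠ 0 := by positivity
      have hn3 : n.2.2 = (1:ℝ) := rfl
      rw [hn3, one_mul] at h0
      exact (mul_eq_zero.mp h0).resolve_left hc
    · intro h s hs t ht n hn1 hn2
      rw [key_eq hIo hs ha hapos (hJpos ht) n hn1 hn2, h s hs, mul_zero]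
  have haffine : (∀ s ∈ I, a s * deriv (deriv a) s - 2 * (deriv a s) ^ 2 = 0) ↔
      ∃ α β : ℝ, ∀ s ∈ I, a s * (α * s + β) = 1 := by
    constructor
    · intro h
      obtain ⟨s₀, hs₀⟩ := hIne
      have hinv : ∀ x ∈ I, HasDerivAt (fun y => (a y)⁻¹) (-(deriv a x / (a x) ^ 2)) x :=
        fun x hx => by
          exact ((hdiff1 hIo ha x hx).inv (hapos x hx).ne').congr_deriv (neg_div _ _)
      have hF' : ∀ x ∈ I, HasDerivAt (fun y => -(deriv a y / (a y) ^ 2)) 0 x := fun x hx => by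
        have hd : HasDerivAt (fun y => -(deriv a y / (a y) ^ 2))
            (-((deriv (deriv a) x * (a x) ^ 2 - deriv a x * ((2:ℕ) * (a x) ^ 1 * deriv a x))
              / ((a x) ^ 2) ^ 2)) x :=
          ((hdiff2 hIo ha x hx).div ((hdiff1 hIo ha x hx).pow 2)
            (pow_ne_zero 2 (hapos x hx).ne')).neg
        refine hd.congr_deriv ?_
        have h0 := h x hx
        have hax := (hapos x hx).ne'
        field_simp
        linear_combination (-1) * h0
      set α : ℝ := -(deriv a s₀ / (a s₀) ^ 2) with hα
      have hc1 : ∀ x ∈ I, -(deriv a x / (a x) ^ 2) = α := fun x hx =>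
        const_of_deriv_zero hconv hIo hF' hx hs₀
      have hG : ∀ x ∈ I, HasDerivAt (fun y => (a y)⁻¹ - α * y) 0 x := fun x hx => by
        have hd := (hinv x hx).sub ((hasDerivAt_id x).const_mul α)
        refine hd.congr_deriv ?_
        rw [hc1 x hx]
        ring
      have hc2 : ∀ x ∈ I, (a x)⁻¹ - α * x = (a s₀)⁻¹ - α * s₀ := fun x hx =>
        const_of_deriv_zero hconv hIo hG hx hs₀
      refine ⟨α, (a s₀)⁻¹ - α * s₀, fun x hx => ?_⟩
      have hinvx : (a x)⁻¹ = α * x + ((a s₀)⁻¹ - α * s₀) := by linarith [hc2 x hx]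
      rw [← hinvx, mul_inv_cancel₀ (hapos x hx).ne']
    · rintro ⟨α, β, hab⟩ s hs
      have hune : ∀ x ∈ I, α * x + β ≠ 0 := fun x hx h0 => by
        have h1 := hab x hx
        rw [h0, mul_zero] at h1
        exact one_ne_zero h1.symm
      have hev : ∀ x ∈ I, a =ᶠ[nhds x] fun y => (α * y + β)⁻¹ := fun x hx => by
        filter_upwards [hIo.mem_nhds hx] with y hy
        have h1 := hab y hy
        field_simp [hune y hy]
        linarith [h1]
      have hw : ∀ x ∈ I, HasDerivAt (fun y => (α * y + β)⁻¹)
          (-(α * 1) / (α * x + β) ^ 2) x := fun x hx =>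
        (((hasDerivAt_id x).const_mul α).add_const β).inv (hune x hx)
      have hd1 : ∀ x ∈ I, deriv a x = -(α * 1) / (α * x + β) ^ 2 := fun x hx => by
        rw [(hev x hx).deriv_eq, (hw x hx).deriv]
      have hd1ev : deriv a =ᶠ[nhds s] fun x => -(α * 1) / (α * x + β) ^ 2 := by
        filter_upwards [hIo.mem_nhds hs] with x hx using hd1 x hx
      have hw2 : HasDerivAt (fun x => -(α * 1) / (α * x + β) ^ 2)
          ((0 * (α * s + β) ^ 2 - (-(α * 1)) * ((2:ℕ) * (α * s + β) ^ 1 * (α * 1)))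
            / ((α * s + β) ^ 2) ^ 2) s := by
        have := ((hasDerivAt_const s (-(α * 1))).div
          ((((hasDerivAt_id s).const_mul α).add_const β).pow 2)
          (pow_ne_zero 2 (hune s hs)))
        exact this
      have hd2 : deriv (deriv a) s
          = (0 * (α * s + β) ^ 2 - (-(α * 1)) * ((2:ℕ) * (α * s + β) ^ 1 * (α * 1)))
            / ((α * s + β) ^ 2) ^ 2 := by
        rw [hd1ev.deriv_eq, hw2.deriv]
      have has : a s = (α * s + β)⁻¹ := by
        have h1 := hab s hs
        field_simp [hune s hs]
        linarith [h1]
      rw [hd2, hd1 s hs, has]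
      field_simp [hune s hs]
      ring
  exact ⟨hODE.trans haffine, hODE⟩
end
end

section
/- A cyclic surface in Sol₃ foliated by horocycles of the form X(s,t) = (s, t, a(s)), where a : I → ℝ is twice continuously differentiable on a nonempty open interval I and t ranges over ℝ, has zero mean curvature if and only if a''(s) = a'(s)² on I, which holds if and only if s ↦ e^{−a(s)} is affine, i.e. there exist λ, μ ∈ ℝ with e^{−a(s)} = λ·s + μ for all s ∈ I. -/
open Real

noncomputable section

/-- Auxiliary: a function with `HasDerivAt f 0` on an open convex set is constant there. -/
lemma const_of_hasDerivAt_zero' {I : Set ℝ} (hIo : IsOpen I) (hIc : Convex ℝ I)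
    {f : ℝ → ℝ} (hf : ∀ x ∈ I, HasDerivAt f 0 x) {x y : ℝ} (hx : x ∈ I) (hy : y ∈ I) :
    f x = f y := by
  apply hIc.is_const_of_fderivWithin_eq_zero
    (fun z hz => ((hf z hz).differentiableAt).differentiableWithinAt) _ hx hy
  intro z hz
  rw [fderivWithin_of_isOpen hIo hz, (hf z hz).hasFDerivAt.fderiv]
  ext
  simp

/-- The cyclic surface `X(s,t) = (s, t, a(s))` foliated by horocycles
has zero mean curvature iff `a'' = a'²` on `I`, iff `e^{-a}` is affine. -/
theorem minimal_foliated_by_horocycles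
    (I : Set ℝ) (hIo : IsOpen I) (hIne : I.Nonempty) (hIc : I.OrdConnected)
    (a : ℝ → ℝ) (ha : ContDiffOn ℝ 2 a I) :
    (MeanZero I Set.univ (fun s t => (s, t, a s)) ↔
      ∀ s ∈ I, deriv (deriv a) s = (deriv a s) ^ 2) ∧
    ((∀ s ∈ I, deriv (deriv a) s = (deriv a s) ^ 2) ↔
      ∃ lam mu : ℝ, ∀ s ∈ I, exp (-a s) = lam * s + mu) := by
  set X : ℝ → ℝ → V3 := fun s t => (s, t, a s) with hXdef
  have hda : ∀ s ∈ I, HasDerivAt a (deriv a s) s := fun s hs =>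
    (((ha.differentiableOn (by norm_num)) s hs).differentiableAt (hIo.mem_nhds hs)).hasDerivAt
  have hda' : ∀ s ∈ I, HasDerivAt (deriv a) (deriv (deriv a) s) s := by
    intro s hs
    have h1 : ContDiffOn ℝ 1 (deriv a) I := ha.deriv_of_isOpen hIo (by norm_num)
    exact (((h1.differentiableOn one_ne_zero) s hs).differentiableAt (hIo.mem_nhds hs)).hasDerivAt
  have hXs : ∀ t : ℝ, ∀ s ∈ I, pXs X s t = (1, 0, deriv a s) := by
    intro t s hs
    exact ((hasDerivAt_id s).prodMk ((hasDerivAt_const s t).prodMk (hda s hs))).deriv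
  have hXt : ∀ s t : ℝ, pXt X s t = (0, 1, 0) := by
    intro s t
    exact ((hasDerivAt_const t s).prodMk ((hasDerivAt_id t).prodMk (hasDerivAt_const t (a s)))).deriv
  have hXss : ∀ t : ℝ, ∀ s ∈ I, deriv (fun s' => pXs X s' t) s = (0, 0, deriv (deriv a) s) := by
    intro t s hs
    have he : (fun s' => pXs X s' t) =ᶠ[nhds s] (fun s' => ((1:ℝ), (0:ℝ), deriv a s')) :=
      Filter.eventuallyEq_of_mem (hIo.mem_nhds hs) (fun s' hs' => hXs t s' hs')
    rw [he.deriv_eq]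
    exact ((hasDerivAt_const s (1:ℝ)).prodMk ((hasDerivAt_const s (0:ℝ)).prodMk (hda' s hs))).deriv
  have hXst : ∀ t : ℝ, ∀ s ∈ I, deriv (fun t' => pXs X s t') t = 0 := by
    intro t s hs
    have : (fun t' => pXs X s t') = fun _ => ((1:ℝ), (0:ℝ), deriv a s) :=
      funext fun t' => hXs t' s hs
    rw [this, deriv_const]
  have hXtt : ∀ s t : ℝ, deriv (fun t' => pXt X s t') t = 0 := by
    intro s t
    have : (fun t' => pXt X s t') = fun _ => ((0:ℝ), (1:ℝ), (0:ℝ)) := funext fun t' => hXt s t'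
    rw [this, deriv_const]
  have hSss : ∀ t : ℝ, ∀ s ∈ I,
      Sss X s t = (2 * deriv a s, 0, deriv (deriv a) s - exp (2 * a s)) := by
    intro t s hs
    simp only [Sss, hXss t s hs, hXs t s hs, GammaSol]; simp only [hXdef]
    simp [Prod.ext_iff]
    try ring
    try exact ⟨trivial, trivial⟩
  have hSst : ∀ t : ℝ, ∀ s ∈ I, Sst X s t = (0, -(deriv a s), 0) := by
    intro t s hs
    simp only [Sst, hXst t s hs, hXs t s hs, hXt, GammaSol]; simp only [hXdef]
    simp [Prod.ext_iff]
    try ring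
    try exact ⟨trivial, trivial⟩
  have hStt : ∀ t : ℝ, ∀ s ∈ I, Stt X s t = (0, 0, exp (-(2 * a s))) := by
    intro t s hs
    simp only [Stt, hXtt s t, hXt, GammaSol]; simp only [hXdef]
    simp [Prod.ext_iff]
    try ring
    try exact ⟨trivial, trivial⟩
  constructor
  · constructor
    · intro h s hs
      have h0 := h s hs 0 trivial (deriv a s, 0, -exp (2 * a s)) ?_ ?_
      · rw [hSss 0 s hs, hSst 0 s hs, hStt 0 s hs, hXs 0 s hs, hXt s 0] at h0
        simp only [gSol, hXdef, Real.exp_neg] at h0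
        have hE := Real.exp_pos (2 * a s)
        field_simp at h0
        have h1 : rexp (2 * a s) ^ 2 * (deriv (deriv a) s - deriv a s ^ 2) = 0 := by
          linear_combination -h0
        have h4 := (mul_eq_zero.mp h1).resolve_left (by positivity)
        linarith
      · rw [hXs 0 s hs]
        simp only [gSol, hXdef, Real.exp_neg]
        field_simp
        ring
      · rw [hXt s 0]
        simp only [gSol, hXdef]
        ring
    · intro h s hs t _ n hn1 hn2
      rw [hXs t s hs] at hn1
      rw [hXt s t] at hn2
      rw [hSss t s hs, hSst t s hs, hStt t s hs, hXs t s hs, hXt s t]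
      simp only [gSol, hXdef, Real.exp_neg] at hn1 hn2 ⊢
      have hE := Real.exp_pos (2 * a s)
      have h2 : n.2.1 = 0 := by
        field_simp at hn2
        linear_combination hn2
      have h3 := h s hs
      field_simp at hn1 ⊢
      linear_combination (2 * deriv a s) * hn1 + rexp (2 * a s) * n.2.2 * h3
  · constructor
    · intro h
      obtain ⟨s₀, hs₀⟩ := hIne
      have hconv : Convex ℝ I := hIc.convex
      have hg0 : ∀ s ∈ I, HasDerivAt (fun u => -(deriv a u) * exp (-a u)) 0 s := by
        intro s hs
        have := ((hda' s hs).neg).mul (((hda s hs).neg).exp)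
        refine this.congr_deriv ?_
        rw [h s hs]
        simp only [Pi.neg_apply]
        ring
      set lam : ℝ := -(deriv a s₀) * exp (-a s₀) with hlam
      have hgl : ∀ s ∈ I, -(deriv a s) * exp (-a s) = lam := fun s hs =>
        const_of_hasDerivAt_zero' hIo hconv hg0 hs hs₀
      have hf0 : ∀ s ∈ I, HasDerivAt (fun u => exp (-a u) - lam * u) 0 s := by
        intro s hs
        have h1 : HasDerivAt (fun u => exp (-a u) - lam * u)
            (exp (-a s) * -(deriv a s) - lam) s :=
          ((((hda s hs).neg).exp).sub ((hasDerivAt_id' s).const_mul lam)).congr_deriv (by simp only [Pi.neg_apply]; ring)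
        convert h1 using 1
        rw [← hgl s hs]
        ring
      refine ⟨lam, exp (-a s₀) - lam * s₀, fun s hs => ?_⟩
      have := const_of_hasDerivAt_zero' hIo hconv hf0 hs hs₀
      linarith [this]
    · rintro ⟨lam, mu, hlm⟩ s hs
      have hd1 : ∀ s' ∈ I, -(deriv a s') * exp (-a s') = lam := by
        intro s' hs'
        have he : (fun u => exp (-a u)) =ᶠ[nhds s'] (fun u => lam * u + mu) :=
          Filter.eventuallyEq_of_mem (hIo.mem_nhds hs') (fun u hu => hlm u hu)
        have h1 : deriv (fun u => exp (-a u)) s' = exp (-a s') * -(deriv a s') :=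
          (((hda s' hs').neg).exp).deriv
        have h2 : deriv (fun u => lam * u + mu) s' = lam := by
          rw [deriv_add_const]
          simpa using ((hasDerivAt_id s').const_mul lam).deriv
        rw [he.deriv_eq, h2] at h1
        linarith [h1]
      have he2 : (fun u => -(deriv a u) * exp (-a u)) =ᶠ[nhds s] (fun _ => lam) :=
        Filter.eventuallyEq_of_mem (hIo.mem_nhds hs) (fun u hu => hd1 u hu)
      have hz : HasDerivAt (fun u => -(deriv a u) * exp (-a u)) 0 s :=
        (hasDerivAt_const s lam).congr_of_eventuallyEq he2
      have hw : HasDerivAt (fun u => -(deriv a u) * exp (-a u))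
          (-(deriv (deriv a) s) * exp (-a s) + -(deriv a s) * (exp (-a s) * -(deriv a s))) s :=
        ((hda' s hs).neg).mul (((hda s hs).neg).exp)
      have huniq := hz.unique hw
      have hE := Real.exp_pos (-a s)
      nlinarith [huniq, hE]
end
end
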